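/- If T is a Π^in_α-axiomatizable theory with α-back-and-forth structure presented by 𝔹, then every model C of the theory T_α is a model of T. -/

import Mathlib

attribute [local instance] Classical.propDecidable

noncomputable section

/-! ## Basic oracle computability on Cantor space -/

abbrev Cantor := ℕ → Bool

/-- Kleene-style partial recursion relative to an oracle `O`. -/
inductive RecursiveInOracle (O : ℕ →. ℕ) : (ℕ →. ℕ) → Prop
  | oracle : RecursiveInOracle O O
  | zero : RecursiveInOracle O (pure 0)
  | succ : RecursiveInOracle O Nat.succ
  | left : RecursiveInOracle O ↑fun n : ℕ => n.unpair.1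
  | right : RecursiveInOracle O ↑fun n : ℕ => n.unpair.2
  | pair {f g} : RecursiveInOracle O f → RecursiveInOracle O g →
      RecursiveInOracle O fun n => Nat.pair <$> f n <*> g n
  | comp {f g} : RecursiveInOracle O f → RecursiveInOracle O g →
      RecursiveInOracle O fun n => g n >>= f
  | prec {f g} : RecursiveInOracle O f → RecursiveInOracle O g →
      RecursiveInOracle O (Nat.unpaired fun a n =>
        n.rec (f a) fun y IH => do let i ← IH; g (Nat.pair a (Nat.pair y i)))
  | rfind {f} : RecursiveInOracle O f →
      RecursiveInOracle O fun a => Nat.rfind fun n => (fun m => m = 0) <$> f (Nat.pair a n)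

def asOracle (X : Cantor) : ℕ →. ℕ := fun n => Part.some (cond (X n) 1 0)

/-- `TRed X Y` : `X` is Turing reducible to `Y` (`X ≤_T Y`). -/
def TRed (X Y : Cantor) : Prop := RecursiveInOracle (asOracle Y) (asOracle X)

/-- Turing equivalence. -/
def TEquiv (X Y : Cantor) : Prop := TRed X Y ∧ TRed Y X

/-- Turing join `X ⊕ Y`. -/
def joinC (X Y : Cantor) : Cantor := fun n => if n % 2 = 0 then X (n / 2) else Y (n / 2)

def evens (Z : Cantor) : Cantor := fun n => Z (2 * n)
def odds (Z : Cantor) : Cantor := fun n => Z (2 * n + 1)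

/-- `X` is (outright) computable. -/
def ComputableC (X : Cantor) : Prop := TRed X fun _ => false

/-! ## Ordinals computable in an oracle; `ω₁^X` -/

/-- The strict order relation on the field coded by `r` (as a set of codes of pairs). -/
def relOf (r : Cantor) :
    {n : ℕ // r (Nat.pair n n) = true} → {n : ℕ // r (Nat.pair n n) = true} → Prop :=
  fun a b => r (Nat.pair a.1 b.1) = true ∧ a.1 ≠ b.1

/-- `r` codes a well-ordering of order type `α`. -/
def CodesOrdinal (r : Cantor) (α : Ordinal) : Prop :=
  ∃ h : IsWellOrder _ (relOf r), @Ordinal.type _ (relOf r) h = α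

/-- `ω₁^X`: the least ordinal with no `X`-computable copy. -/
def omega1C (X : Cantor) : Ordinal :=
  sInf {α : Ordinal | ¬ ∃ r : Cantor, TRed r X ∧ CodesOrdinal r α}

/-- `α` is admissible: of the form `ω₁^X`. -/
def AdmissibleOrd (α : Ordinal) : Prop := ∃ X : Cantor, omega1C X = α

/-! ## Projective sets and projective determinacy -/

/-- Projective subsets of Cantor space. -/
inductive ProjectiveSet : Set Cantor → Prop
  | borel {s : Set Cantor} : MeasurableSet s → ProjectiveSet s
  | compl {s} : ProjectiveSet s → ProjectiveSet sᶜ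
  | proj {s} : ProjectiveSet s → ProjectiveSet {X | ∃ Y : Cantor, joinC X Y ∈ s}

/-- A function `2^ω → 2^ω` is projective if its graph is. -/
def ProjFun (g : Cantor → Cantor) : Prop := ProjectiveSet {Z | odds Z = g (evens Z)}

/-- History of a play of the Gale–Stewart game where I follows `σ`, II follows `τ`. -/
def histAux (σ τ : List Bool → Bool) : ℕ → List Bool
  | 0 => []
  | n + 1 => histAux σ τ n ++ [if n % 2 = 0 then σ (histAux σ τ n) else τ (histAux σ τ n)]

/-- The infinite play produced by strategies `σ` (player I) and `τ` (player II). -/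
def play (σ τ : List Bool → Bool) : Cantor :=
  fun n => if n % 2 = 0 then σ (histAux σ τ n) else τ (histAux σ τ n)

/-- The game with payoff `A` is determined. -/
def DeterminedG (A : Set Cantor) : Prop :=
  (∃ σ, ∀ τ, play σ τ ∈ A) ∨ (∃ τ, ∀ σ, play σ τ ∉ A)

/-- Projective determinacy. -/
def PD : Prop := ∀ A : Set Cantor, ProjectiveSet A → DeterminedG A

/-! ## Trees on `2^{<ω}` -/

def seg (Y : Cantor) (n : ℕ) : List Bool := (List.range n).map Y

def IsTree (P : List Bool → Bool) : Prop :=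
  P [] = true ∧ ∀ σ b, P (σ ++ [b]) = true → P σ = true

def IsPathT (P : List Bool → Bool) (Y : Cantor) : Prop := ∀ n, P (seg Y n) = true

def IsSplit (P : List Bool → Bool) (σ : List Bool) : Prop :=
  P (σ ++ [false]) = true ∧ P (σ ++ [true]) = true

def PerfectT (P : List Bool → Bool) : Prop :=
  ∀ σ, P σ = true → ∃ τ, σ <+: τ ∧ IsSplit P τ

def PrunedT (P : List Bool → Bool) : Prop :=
  ∀ σ, P σ = true → P (σ ++ [false]) = true ∨ P (σ ++ [true]) = true

/-- The tree as an element of Cantor space (via coding of finite strings). -/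
def treeSet (P : List Bool → Bool) : Cantor := fun n =>
  match (Encodable.decode n : Option (List Bool)) with
  | some σ => P σ
  | none => false

/-- A perfect (pruned) tree all of whose paths compute it. -/
def PointedT (P : List Bool → Bool) : Prop :=
  IsTree P ∧ PrunedT P ∧ PerfectT P ∧ ∀ Y, IsPathT P Y → TRed (treeSet P) Y

/-- Number of splitting levels of `P` along `Y` below `k`. -/
def splitsBelow (P : List Bool → Bool) (Y : Cantor) (k : ℕ) : ℕ :=
  ((List.range k).filter fun j => decide (IsSplit P (seg Y j))).length

/-- `Y` is the path of `P` obtained by following `X` at every split of `P`. -/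
def FollowsT (P : List Bool → Bool) (X Y : Cantor) : Prop :=
  IsPathT P Y ∧ (∀ n, ∃ k, n ≤ k ∧ IsSplit P (seg Y k)) ∧
    ∀ k, IsSplit P (seg Y k) → Y k = X (splitsBelow P Y k)

/-! ## Countable structures and infinitary logic -/

/-- A structure on domain `ℕ` in the relational language whose `i`-th symbol has arity `ar i`. -/
def Str (ar : ℕ → ℕ) := (i : ℕ) → (Fin (ar i) → ℕ) → Prop

/-- `L_{ω₁,ω}` formulas (variables indexed by `ℕ`, countable conjunctions). -/
inductive IForm (ar : ℕ → ℕ) : Type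
  | atom (i : ℕ) (v : Fin (ar i) → ℕ)
  | eq (x y : ℕ)
  | not (φ : IForm ar)
  | conj (φs : ℕ → IForm ar)
  | all (x : ℕ) (φ : IForm ar)

variable {ar : ℕ → ℕ}

def Sat (A : Str ar) : (ℕ → ℕ) → IForm ar → Prop
  | s, .atom i v => A i fun j => s (v j)
  | s, .eq x y => s x = s y
  | s, .not φ => ¬ Sat A s φ
  | s, .conj φs => ∀ n, Sat A s (φs n)
  | s, .all x φ => ∀ a : ℕ, Sat A (Function.update s x a) φ

def freeVars : IForm ar → Set ℕ
  | .atom _ v => Set.range v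
  | .eq x y => {x, y}
  | .not φ => freeVars φ
  | .conj φs => ⋃ n, freeVars (φs n)
  | .all x φ => freeVars φ \ {x}

/-- A sentence: no free variables. -/
def SentenceF (φ : IForm ar) : Prop := freeVars φ = ∅

/-- Satisfaction of a sentence. -/
def SatS (A : Str ar) (φ : IForm ar) : Prop := Sat A (fun _ => 0) φ

def IForm.disj (φs : ℕ → IForm ar) : IForm ar := .not (.conj fun n => .not (φs n))
def IForm.ex (x : ℕ) (φ : IForm ar) : IForm ar := .not (.all x (.not φ))
def IForm.exs (l : List ℕ) (φ : IForm ar) : IForm ar := l.foldr IForm.ex φ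
def IForm.alls (l : List ℕ) (φ : IForm ar) : IForm ar := l.foldr IForm.all φ
def IForm.and (φ ψ : IForm ar) : IForm ar := .conj fun n => if n = 0 then φ else ψ

/-- Finitary quantifier-free formulas. -/
inductive QFree : IForm ar → Prop
  | atom {i v} : QFree (.atom i v)
  | eq {x y} : QFree (.eq x y)
  | not {φ} : QFree φ → QFree (.not φ)
  | and {φ ψ} : QFree φ → QFree ψ → QFree (φ.and ψ)

mutual
/-- `Σ^in_α` formulas. -/
inductive IsSig : Ordinal.{0} → IForm ar → Prop
  | qf {α : Ordinal} {φ : IForm ar} : QFree φ → IsSig α φ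
  | comp {α : Ordinal} (β : ℕ → Ordinal) (vs : ℕ → List ℕ) (φs : ℕ → IForm ar) :
      (∀ n, β n < α) → (∀ n, IsPi (β n) (φs n)) →
      IsSig α (IForm.disj fun n => IForm.exs (vs n) (φs n))
/-- `Π^in_α` formulas. -/
inductive IsPi : Ordinal.{0} → IForm ar → Prop
  | qf {α : Ordinal} {φ : IForm ar} : QFree φ → IsPi α φ
  | comp {α : Ordinal} (β : ℕ → Ordinal) (vs : ℕ → List ℕ) (φs : ℕ → IForm ar) :
      (∀ n, β n < α) → (∀ n, IsSig (β n) (φs n)) →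
      IsPi α (.conj fun n => IForm.alls (vs n) (φs n))
end

/-- `Σ^in_α`-elementary equivalence (`A ≡_α B`). -/
def SigEquiv (α : Ordinal) (A B : Str ar) : Prop :=
  ∀ φ : IForm ar, IsSig α φ → SentenceF φ → (SatS A φ ↔ SatS B φ)

/-- The assignment sending variable `i` to the `i`-th entry of the tuple `a`. -/
def asn (a : List ℕ) : ℕ → ℕ := fun i => a.getD i 0

/-- Every `Π^in_α` formula (with free variables among the tuple) true of `ā` in `A`
is true of `b̄` in `B`. -/
def PiTypeSub (α : Ordinal) (A : Str ar) (a : List ℕ) (B : Str ar) (b : List ℕ) : Prop :=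
  ∀ φ : IForm ar, IsPi α φ → freeVars φ ⊆ Set.Iio a.length →
    Sat A (asn a) φ → Sat B (asn b) φ

/-! ## Back-and-forth relations -/

/-- `ā` and `b̄` satisfy the same atomic formulas among the first `|ā|` symbols. -/
def atomEquiv (A : Str ar) (a : List ℕ) (B : Str ar) (b : List ℕ) : Prop :=
  a.length = b.length ∧
  (∀ p q, p < a.length → q < a.length →
    (a.getD p 0 = a.getD q 0 ↔ b.getD p 0 = b.getD q 0)) ∧
  (∀ i, i < a.length → ∀ v : Fin (ar i) → ℕ, (∀ j, v j < a.length) →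
    (A i (fun j => a.getD (v j) 0) ↔ B i fun j => b.getD (v j) 0))

/-- The `α`-back-and-forth relations `(A,ā) ≤_α (B,b̄)`. -/
def BFLe (α : Ordinal.{0}) (A : Str ar) (a : List ℕ) (B : Str ar) (b : List ℕ) : Prop :=
  if α = 0 then atomEquiv A a B b
  else ∀ (d : List ℕ) (γ : Ordinal.{0}) (hγ : γ < α),
    ∃ c : List ℕ, c.length = d.length ∧ BFLe γ B (b ++ d) A (a ++ c)
termination_by α
decreasing_by exact hγ

/-- `(A,ā) ≡_α (B,b̄)`. -/
def BFEq (α : Ordinal) (A : Str ar) (a : List ℕ) (B : Str ar) (b : List ℕ) : Prop :=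
  BFLe α A a B b ∧ BFLe α B b A a

/-- `(C,c̄)` belongs to `ext_β(A,ā)`: it is `≤_β` some `(A, ād̄)`. -/
def ExtMem (β : Ordinal) (C : Str ar) (c : List ℕ) (A : Str ar) (a : List ℕ) : Prop :=
  ∃ d : List ℕ, c.length = a.length + d.length ∧ BFLe β C c A (a ++ d)

/-- Re-arrangement `π_ι` of a tuple. -/
def projT (ι : List ℕ) (a : List ℕ) : List ℕ := ι.map fun j => a.getD j 0

/-! ## Isomorphism, diagrams, copies, spectra, Scott rank -/

def IsoStr (A B : Str ar) : Prop :=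
  ∃ e : ℕ ≃ ℕ, ∀ i v, A i v ↔ B i fun j => e (v j)

/-- `D` is (the characteristic function of) the atomic diagram of `B`. -/
def DiagOf (B : Str ar) (D : Cantor) : Prop :=
  ∀ i (v : Fin (ar i) → ℕ),
    (B i v ↔ D (Nat.pair i (Encodable.encode (List.ofFn v))) = true)

/-- `X` computes a copy of `A`. -/
def ComputesCopy (X : Cantor) (A : Str ar) : Prop :=
  ∃ B D, IsoStr A B ∧ DiagOf B D ∧ TRed D X

/-- `ω₁^A = min{ω₁^X : X computes a copy of A}`. -/
def omega1Str (A : Str ar) : Ordinal :=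
  sInf {β : Ordinal | ∃ X, ComputesCopy X A ∧ omega1C X = β}

/-- `ω₁^{A,Y} = min{ω₁^X : X ≥_T Y, X computes a copy of A}`. -/
def omega1StrRel (A : Str ar) (Y : Cantor) : Ordinal :=
  sInf {β : Ordinal | ∃ X, TRed Y X ∧ ComputesCopy X A ∧ omega1C X = β}

/-- The two tuples satisfy the same `L_{ω₁,ω}` formulas in `A`. -/
def AllTypeEq (A : Str ar) (a b : List ℕ) : Prop :=
  ∀ φ : IForm ar, freeVars φ ⊆ Set.Iio a.length → (Sat A (asn a) φ ↔ Sat A (asn b) φ)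

/-- `ρ_A(ā)`: least `α` such that the `Π^in_α` type of `ā` determines its full type. -/
def rhoSR (A : Str ar) (a : List ℕ) : Ordinal :=
  sInf {α : Ordinal | ∀ b : List ℕ, b.length = a.length →
    PiTypeSub α A a A b → AllTypeEq A a b}

/-- Scott rank. -/
def SR (A : Str ar) : Ordinal := ⨆ a : List ℕ, rhoSR A a + 1

/-! ## Counting models -/

def CountablyManyModels (T : IForm ar) : Prop :=
  ∃ S : Set (Str ar), S.Countable ∧ ∀ A, SatS A T → ∃ B ∈ S, IsoStr A B

/-- `T` is scattered: countably many `≡_α`-classes of models for each `α < ω₁`. -/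
def ScatteredT (T : IForm ar) : Prop :=
  ∀ α : Ordinal, α < (Cardinal.aleph 1).ord →
    ∃ S : Set (Str ar), S.Countable ∧ ∀ A, SatS A T → ∃ B ∈ S, SatS B T ∧ SigEquiv α A B

/-- Counterexample to Vaught's conjecture. -/
def CexVC (T : IForm ar) : Prop := ScatteredT T ∧ ¬ CountablyManyModels T

/-- `T` has exactly `ℵ₁` many models up to isomorphism. -/
def Aleph1ManyModels (T : IForm ar) : Prop :=
  Cardinal.mk (Quot fun A B : {M : Str ar // SatS M T} => IsoStr A.1 B.1) = Cardinal.aleph 1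

/-- Minimal counterexample to Vaught's conjecture. -/
def MinimalCex (T : IForm ar) : Prop :=
  Aleph1ManyModels T ∧ ScatteredT T ∧
    ∀ φ : IForm ar, SentenceF φ →
      CountablyManyModels (T.and φ) ∨ CountablyManyModels (T.and φ.not)

/-! ## Computable infinitary formulas -/

/-- `FCodes ar c φ`: `c` is a code of the computable infinitary formula `φ`. -/
inductive FCodes (ar : ℕ → ℕ) : ℕ → IForm ar → Prop
  | atom (i : ℕ) (v : Fin (ar i) → ℕ) :
      FCodes ar (Nat.pair 0 (Nat.pair i (Encodable.encode (List.ofFn fun j => v j)))) (.atom i v)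
  | eq (x y : ℕ) : FCodes ar (Nat.pair 1 (Nat.pair x y)) (.eq x y)
  | not {c φ} : FCodes ar c φ → FCodes ar (Nat.pair 2 c) (.not φ)
  | all {c φ} (x : ℕ) : FCodes ar c φ → FCodes ar (Nat.pair 3 (Nat.pair x c)) (.all x φ)
  | conj (c : Nat.Partrec.Code) (g : ℕ → ℕ) (φs : ℕ → IForm ar) :
      (∀ n, g n ∈ c.eval n) → (∀ n, FCodes ar (g n) (φs n)) →
      FCodes ar (Nat.pair 4 (Encodable.encode c)) (.conj φs)

/-- A computable infinitary (`L^c_{ω₁,ω}`) formula. -/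
def ComputableForm (φ : IForm ar) : Prop := ∃ c, FCodes ar c φ

/-! ## Finite diagrams -/

/-- `m` codes an atomic fact (among the first `|ā|` symbols) true of `ā` in `A`. -/
def FinDiagMem (A : Str ar) (a : List ℕ) (m : ℕ) : Prop :=
  ∃ (i : ℕ) (l : List ℕ), m = Nat.pair i (Encodable.encode l) ∧ i < a.length ∧
    l.length = ar i ∧ (∀ j ∈ l, j < a.length) ∧ A i fun j => a.getD (l.getD (j : ℕ) 0) 0

def tuplesBelow (k : ℕ) : ℕ → List (List ℕ)
  | 0 => [[]]
  | n + 1 => (List.range k).flatMap fun x => (tuplesBelow k n).map fun l => x :: l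

def atomCodes (ar : ℕ → ℕ) (k : ℕ) : List ℕ :=
  (List.range k).flatMap fun i => (tuplesBelow k (ar i)).map fun l => Nat.pair i (Encodable.encode l)

/-- A number coding the atomic diagram `D_A(ā)` of the tuple `ā` in `A`
(over the first `|ā|` symbols of the language). -/
def diagCode (A : Str ar) (a : List ℕ) : ℕ :=
  Nat.pair a.length <| Encodable.encode <|
    (atomCodes ar a.length).filter fun m => decide (FinDiagMem A a m)

/-- A computably enumerable set of naturals. -/
def CEset (S : Set ℕ) : Prop := ∃ c : Nat.Partrec.Code, ∀ n, n ∈ S ↔ (c.eval n).Dom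

/-! ## Hyperarithmetic reducibility (via the Δ¹₁ = HYP characterization) -/

def Pi11In (X : Cantor) (S : Set ℕ) : Prop :=
  ∃ R : Cantor, TRed R X ∧ ∀ n, n ∈ S ↔
    ∀ f : ℕ → ℕ, ∃ k, R (Nat.pair n (Encodable.encode ((List.range k).map f))) = true

/-- `Y` is hyperarithmetic in `X` (i.e. `Δ¹₁(X)`). -/
def HypIn (Y X : Cantor) : Prop :=
  Pi11In X {n | Y n = true} ∧ Pi11In X {n | Y n = false}

/-- `A` has an `X`-hyperarithmetic copy. -/
def HypCopy (X : Cantor) (A : Str ar) : Prop :=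
  ∃ B D, IsoStr A B ∧ DiagOf B D ∧ HypIn D X

/-! ## The theory `T_α` of the `α`-back-and-forth structure, semantically -/

/-- A structure in the extended language `L_α`: a base `L`-structure together with
interpretations of the relations `φ_σ`, where the `β`-bf-type `σ` is represented by a
pair `(C, c̄)` (a model of `T` with a distinguished tuple). -/
structure ExtModel (ar : ℕ → ℕ) where
  base : Str ar
  Phi : Ordinal.{0} → Str ar → List ℕ → List ℕ → Prop

/-- Interpretation of `ψ_σ(b̄) := ⋁_{σ' ∈ bf_α, (σ')_β = σ} φ_{σ'}(b̄)`,
with `σ` represented by `(C, c̄)`. -/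
def PsiH (T : IForm ar) (α : Ordinal.{0}) (M : ExtModel ar) (β : Ordinal.{0})
    (C : Str ar) (c b : List ℕ) : Prop :=
  ∃ (C' : Str ar) (c' : List ℕ), SatS C' T ∧ c'.length = b.length ∧
    BFEq β C' c' C c ∧ M.Phi α C' c' b

/-- `M` is a model of the theory `T_α` axiomatizing the `α`-bf-structure of `T`:
(invariance of the symbols `φ_σ` in the representative of `σ`), (T1) every tuple realizes
exactly one `β`-bf-type, (T2) the recursive definition of `φ_σ`, and (T3) the
implications of `ψ_σ`. -/
def ModelsTAlpha (T : IForm ar) (α : Ordinal.{0}) (M : ExtModel ar) : Prop :=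
  (∀ β ≤ α, ∀ (C : Str ar) (c : List ℕ) (C' : Str ar) (c' : List ℕ) (b : List ℕ),
      SatS C T → SatS C' T → BFEq β C c C' c' → (M.Phi β C c b ↔ M.Phi β C' c' b)) ∧
  (∀ b : List ℕ, ∃ (C : Str ar) (c : List ℕ), SatS C T ∧ c.length = b.length ∧
      M.Phi α C c b) ∧
  (∀ β < α, ∀ (b : List ℕ) (C : Str ar) (c : List ℕ) (C' : Str ar) (c' : List ℕ),
      SatS C T → SatS C' T → PsiH T α M β C c b → PsiH T α M β C' c' b →
      BFEq β C c C' c') ∧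
  (∀ β ≤ α, ∀ (C : Str ar) (c : List ℕ), SatS C T → ∀ b : List ℕ,
      (M.Phi β C c b ↔ b.length = c.length ∧
        (β = 0 → atomEquiv C c M.base b) ∧
        (∀ γ < β, ∀ (D : Str ar) (d : List ℕ), SatS D T → ¬ ExtMem γ D d C c →
          ∀ y : List ℕ, d.length = b.length + y.length → ¬ M.Phi γ D d (b ++ y)))) ∧
  (∀ β < α, ∀ (C : Str ar) (c b : List ℕ), SatS C T → PsiH T α M β C c b →
      M.Phi β C c b ∧ ∀ γ < β, ∀ (D : Str ar) (d : List ℕ), SatS D T →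
        ExtMem γ D d C c →
        ∃ y : List ℕ, d.length = b.length + y.length ∧ M.Phi γ D d (b ++ y))

/-! ## Presentations of the `α`-back-and-forth structure -/

/-- A presentation `𝔹` of the `α`-bf-structure of `T`: an enumeration of the bf-types
of levels `≤ α` (given by levels and representatives), together with an oracle `B`
coding the relations `≤_β`, the projections `(·)_β` and `π_ι`, the extension relations
`ext`, and the atomic diagrams of the `0`-bf-types. -/
structure BFPres (ar : ℕ → ℕ) (T : IForm ar) (α : Ordinal.{0}) where
  B : Cantor
  lvl : ℕ → Ordinal.{0}
  repS : ℕ → Str ar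
  repT : ℕ → List ℕ
  lvl_le : ∀ n, lvl n ≤ α
  rep_models : ∀ n, SatS (repS n) T
  surj : ∀ β ≤ α, ∀ (A : Str ar) (a : List ℕ), SatS A T →
    ∃ n, lvl n = β ∧ (repT n).length = a.length ∧ BFEq β (repS n) (repT n) A a
  le_code : ∀ m n, (B (Nat.pair 0 (Nat.pair m n)) = true ↔
    lvl m = lvl n ∧ BFLe (lvl m) (repS m) (repT m) (repS n) (repT n))
  proj_code : ∀ m n, (B (Nat.pair 1 (Nat.pair m n)) = true ↔
    lvl m ≤ lvl n ∧ BFEq (lvl m) (repS m) (repT m) (repS n) (repT n))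
  ext_code : ∀ m n, (B (Nat.pair 2 (Nat.pair m n)) = true ↔
    lvl m < lvl n ∧ ExtMem (lvl m) (repS m) (repT m) (repS n) (repT n))
  pi_code : ∀ m n (ι : List ℕ),
    (B (Nat.pair 3 (Nat.pair m (Nat.pair n (Encodable.encode ι)))) = true ↔
      lvl m = lvl n ∧ (∀ j ∈ ι, j < (repT n).length) ∧
      BFEq (lvl m) (repS m) (repT m) (repS n) (projT ι (repT n)))
  diag_code : ∀ m k, (B (Nat.pair 4 (Nat.pair m k)) = true ↔
    lvl m = 0 ∧ FinDiagMem (repS m) (repT m) k)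

end

/-! ### Auxiliary machinery for the proof -/

section Aux

variable {ar : ℕ → ℕ}

/-! #### Basic facts about `atomEquiv` and `BFLe` -/

lemma atomEquiv_refl (A : Str ar) (a : List ℕ) : atomEquiv A a A a :=
  ⟨rfl, fun _ _ _ _ => Iff.rfl, fun _ _ _ _ => Iff.rfl⟩

lemma atomEquiv_symm {A B : Str ar} {a b : List ℕ} (h : atomEquiv A a B b) :
    atomEquiv B b A a := by
  obtain ⟨hl, h2, h3⟩ := h
  refine ⟨hl.symm, fun p q hp hq => (h2 p q (by omega) (by omega)).symm,
    fun i hi v hv => (h3 i (by omega) v (fun j => by have := hv j; omega)).symm⟩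

lemma atomEquiv_trans {A B C : Str ar} {a b c : List ℕ} (h1 : atomEquiv A a B b)
    (h2 : atomEquiv B b C c) : atomEquiv A a C c := by
  obtain ⟨hl, h12, h13⟩ := h1
  obtain ⟨hl', h22, h23⟩ := h2
  refine ⟨hl.trans hl', fun p q hp hq => (h12 p q hp hq).trans (h22 p q (by omega) (by omega)),
    fun i hi v hv => (h13 i hi v hv).trans
      (h23 i (by omega) v (fun j => by have := hv j; omega))⟩

lemma BFLe_zero_iff {A B : Str ar} {a b : List ℕ} :
    BFLe 0 A a B b ↔ atomEquiv A a B b := by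
  rw [BFLe]; simp

lemma BFLe_pos_iff {β : Ordinal} (hβ : β ≠ 0) {A B : Str ar} {a b : List ℕ} :
    BFLe β A a B b ↔ ∀ (d : List ℕ) (γ : Ordinal), γ < β →
      ∃ c : List ℕ, c.length = d.length ∧ BFLe γ B (b ++ d) A (a ++ c) := by
  rw [BFLe]; simp [hβ]

lemma BFLe_refl : ∀ (β : Ordinal) (A : Str ar) (a : List ℕ), BFLe β A a A a := by
  intro β
  induction β using Ordinal.induction with
  | h β IH =>
    intro A a
    rcases eq_or_ne β 0 with rfl | h0
    · exact BFLe_zero_iff.2 (atomEquiv_refl A a)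
    · rw [BFLe_pos_iff h0]
      exact fun d γ hγ => ⟨d, rfl, IH γ hγ _ _⟩

lemma BFEq_refl (β : Ordinal) (A : Str ar) (a : List ℕ) : BFEq β A a A a :=
  ⟨BFLe_refl β A a, BFLe_refl β A a⟩

lemma BFLe_trans : ∀ (β : Ordinal) {A B C : Str ar} {a b c : List ℕ},
    BFLe β A a B b → BFLe β B b C c → BFLe β A a C c := by
  intro β
  induction β using Ordinal.induction with
  | h β IH =>
    intro A B C a b c h1 h2
    rcases eq_or_ne β 0 with rfl | h0
    · exact BFLe_zero_iff.2 (atomEquiv_trans (BFLe_zero_iff.1 h1) (BFLe_zero_iff.1 h2))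
    · rw [BFLe_pos_iff h0] at h1 h2 ⊢
      intro d γ hγ
      obtain ⟨e, he, hbe⟩ := h2 d γ hγ
      obtain ⟨f, hf, haf⟩ := h1 e γ hγ
      exact ⟨f, by omega, IH γ hγ hbe haf⟩

lemma bfle_len {β : Ordinal} {A B : Str ar} {a b : List ℕ} (h : BFLe β A a B b) :
    a.length = b.length := by
  rcases eq_or_ne β 0 with rfl | h0
  · exact (BFLe_zero_iff.1 h).1
  · obtain ⟨c, hc, h0le⟩ := (BFLe_pos_iff h0).1 h [] 0 (pos_iff_ne_zero.2 h0)
    have := (BFLe_zero_iff.1 h0le).1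
    simp only [List.append_nil, List.length_append] at this
    simp only [List.length_nil] at hc
    omega

end Aux
section Aux2

variable {ar : ℕ → ℕ}

/-! #### Sequential updates of assignments -/

def updL : (ℕ → ℕ) → List ℕ → List ℕ → (ℕ → ℕ)
  | s, x :: l, v :: w => updL (Function.update s x v) l w
  | s, _, _ => s

@[simp] lemma updL_nil (s : ℕ → ℕ) (w : List ℕ) : updL s [] w = s := rfl

@[simp] lemma updL_cons (s : ℕ → ℕ) (x : ℕ) (l : List ℕ) (v : ℕ) (w : List ℕ) :
    updL s (x :: l) (v :: w) = updL (Function.update s x v) l w := rfl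

lemma updL_not_mem {z : ℕ} : ∀ (l : List ℕ), z ∉ l → ∀ (s : ℕ → ℕ) (w : List ℕ),
    updL s l w z = s z := by
  intro l
  induction l with
  | nil => intro _ s w; rfl
  | cons x l ih =>
    intro hz s w
    rcases w with _ | ⟨v, w⟩
    · rfl
    · rw [updL_cons, ih (fun h => hz (List.mem_cons_of_mem _ h)) _ _,
        Function.update_of_ne (fun h => hz (by rw [h]; exact List.mem_cons_self))]

lemma updL_mem {z : ℕ} : ∀ (l : List ℕ), z ∈ l →
    ∃ k, k < l.length ∧ ∀ (s : ℕ → ℕ) (w : List ℕ), l.length ≤ w.length →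
      updL s l w z = w.getD k 0 := by
  intro l
  induction l with
  | nil => intro h; cases h
  | cons x l ih =>
    intro hz
    by_cases h : z ∈ l
    · obtain ⟨k, hk, hw⟩ := ih h
      refine ⟨k + 1, by simp; omega, fun s w hlen => ?_⟩
      rcases w with _ | ⟨v, w⟩
      · simp at hlen
      · rw [updL_cons, hw _ _ (by simpa using hlen)]; rfl
    · have hzx : z = x := by rcases List.mem_cons.1 hz with h' | h' <;> tauto
      subst hzx
      refine ⟨0, by simp, fun s w hlen => ?_⟩
      rcases w with _ | ⟨v, w⟩
      · simp at hlen
      · rw [updL_cons, updL_not_mem l h, Function.update_self]; rfl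

lemma updL_take : ∀ (l : List ℕ) (s : ℕ → ℕ) (w : List ℕ),
    updL s l w = updL s l (w.take l.length) := by
  intro l
  induction l with
  | nil => intro s w; rfl
  | cons x l ih =>
    intro s w
    rcases w with _ | ⟨v, w⟩
    · rfl
    · rw [List.length_cons, List.take_succ_cons, updL_cons, updL_cons, ih]

/-! #### Satisfaction of derived connectives -/

lemma sat_not {A : Str ar} {s : ℕ → ℕ} {φ : IForm ar} :
    Sat A s (.not φ) ↔ ¬ Sat A s φ := Iff.rfl

lemma sat_conj {A : Str ar} {s : ℕ → ℕ} {φs : ℕ → IForm ar} :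
    Sat A s (.conj φs) ↔ ∀ n, Sat A s (φs n) := Iff.rfl

lemma sat_all {A : Str ar} {s : ℕ → ℕ} {x : ℕ} {φ : IForm ar} :
    Sat A s (.all x φ) ↔ ∀ v, Sat A (Function.update s x v) φ := Iff.rfl

lemma sat_and {A : Str ar} {s : ℕ → ℕ} {φ ψ : IForm ar} :
    Sat A s (φ.and ψ) ↔ Sat A s φ ∧ Sat A s ψ := by
  constructor
  · intro h; exact ⟨by simpa using h 0, by simpa using h 1⟩
  · rintro ⟨h1, h2⟩ n
    by_cases hn : n = 0 <;> simp [IForm.and, hn, h1, h2]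

lemma sat_disj {A : Str ar} {s : ℕ → ℕ} {φs : ℕ → IForm ar} :
    Sat A s (IForm.disj φs) ↔ ∃ n, Sat A s (φs n) := by
  simp [IForm.disj, sat_not, sat_conj, not_forall]

lemma sat_ex {A : Str ar} {s : ℕ → ℕ} {x : ℕ} {φ : IForm ar} :
    Sat A s (IForm.ex x φ) ↔ ∃ v, Sat A (Function.update s x v) φ := by
  simp [IForm.ex, sat_not, sat_all, not_forall]

lemma sat_alls {A : Str ar} {φ : IForm ar} : ∀ (l : List ℕ) (s : ℕ → ℕ),
    Sat A s (IForm.alls l φ) ↔ ∀ w : List ℕ, l.length ≤ w.length → Sat A (updL s l w) φ := by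
  intro l
  induction l with
  | nil =>
    intro s
    exact ⟨fun h w _ => h, fun h => by simpa [IForm.alls] using h [] (by simp)⟩
  | cons x l ih =>
    intro s
    show Sat A s (.all x (IForm.alls l φ)) ↔ _
    rw [sat_all]
    constructor
    · intro h w hlen
      rcases w with _ | ⟨v, w⟩
      · simp at hlen
      · rw [updL_cons]
        exact (ih _).1 (h v) w (by simpa using hlen)
    · intro h v
      rw [ih]
      intro w hw
      have := h (v :: w) (by simpa using hw)
      rwa [updL_cons] at this

lemma sat_exs {A : Str ar} {φ : IForm ar} : ∀ (l : List ℕ) (s : ℕ → ℕ),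
    Sat A s (IForm.exs l φ) ↔ ∃ w : List ℕ, w.length = l.length ∧ Sat A (updL s l w) φ := by
  intro l
  induction l with
  | nil =>
    intro s
    constructor
    · intro h; exact ⟨[], rfl, h⟩
    · rintro ⟨w, hw, h⟩; simpa [IForm.exs] using h
  | cons x l ih =>
    intro s
    show Sat A s (IForm.ex x (IForm.exs l φ)) ↔ _
    rw [sat_ex]
    constructor
    · rintro ⟨v, hv⟩
      obtain ⟨w, hw, h⟩ := (ih _).1 hv
      exact ⟨v :: w, by simp [hw], by rwa [updL_cons]⟩
    · rintro ⟨w, hw, h⟩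
      rcases w with _ | ⟨v, w⟩
      · simp at hw
      · exact ⟨v, (ih _).2 ⟨w, by simpa using hw, by rwa [updL_cons] at h⟩⟩

/-! #### Free variables of blocks of quantifiers -/

lemma fv_alls {φ : IForm ar} {z : ℕ} : ∀ (l : List ℕ), z ∈ freeVars φ → z ∉ l →
    z ∈ freeVars (IForm.alls l φ) := by
  intro l
  induction l with
  | nil => intro h _; exact h
  | cons x l ih =>
    intro hz hnl
    show z ∈ freeVars (IForm.alls l φ) \ {x}
    exact ⟨ih hz (fun h => hnl (List.mem_cons_of_mem _ h)),
      fun h => hnl (by simp at h; simp [h])⟩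

lemma fv_exs {φ : IForm ar} {z : ℕ} : ∀ (l : List ℕ), z ∈ freeVars φ → z ∉ l →
    z ∈ freeVars (IForm.exs l φ) := by
  intro l
  induction l with
  | nil => intro h _; exact h
  | cons x l ih =>
    intro hz hnl
    show z ∈ freeVars (IForm.exs l φ) \ {x}
    exact ⟨ih hz (fun h => hnl (List.mem_cons_of_mem _ h)),
      fun h => hnl (by simp at h; simp [h])⟩

/-! #### Symbols occurring in a formula -/

inductive SymIn (i : ℕ) : IForm ar → Prop
  | atom (v : Fin (ar i) → ℕ) : SymIn i (.atom i v)
  | not {φ : IForm ar} : SymIn i φ → SymIn i (.not φ)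
  | all {x : ℕ} {φ : IForm ar} : SymIn i φ → SymIn i (.all x φ)
  | conj {φs : ℕ → IForm ar} (n : ℕ) : SymIn i (φs n) → SymIn i (.conj φs)

lemma qf_bound {φ : IForm ar} (hq : QFree φ) : ∃ m, ∀ i, SymIn i φ → i < m := by
  induction hq with
  | @atom i v => exact ⟨i + 1, fun j hj => by cases hj; omega⟩
  | eq => exact ⟨0, fun j hj => by cases hj⟩
  | not _ ih => obtain ⟨m, hm⟩ := ih; exact ⟨m, fun j hj => by cases hj with
      | not h => exact hm _ h⟩
  | and _ _ ih1 ih2 =>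
    obtain ⟨m1, hm1⟩ := ih1
    obtain ⟨m2, hm2⟩ := ih2
    refine ⟨max m1 m2, fun j hj => ?_⟩
    cases hj with
    | conj n h =>
      by_cases hn : n = 0
      · simp only [hn, if_pos rfl] at h
        exact lt_of_lt_of_le (hm1 _ h) (le_max_left _ _)
      · simp only [if_neg hn] at h
        exact lt_of_lt_of_le (hm2 _ h) (le_max_right _ _)

lemma isPi_zero_qf {φ : IForm ar} (h : IsPi 0 φ) : QFree φ := by
  cases h with
  | qf h => exact h
  | comp β vs φs hβ _ => exact absurd (hβ 0) (not_lt_of_ge zero_le)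

lemma isSig_zero_qf {φ : IForm ar} (h : IsSig 0 φ) : QFree φ := by
  cases h with
  | qf h => exact h
  | comp β vs φs hβ _ => exact absurd (hβ 0) (not_lt_of_ge zero_le)

end Aux2
section Aux3

variable {ar : ℕ → ℕ}

/-- Transfer of quantifier-free formulas along `atomEquiv`. -/
lemma qf_sat {A B : Str ar} {a b : List ℕ} (hAE : atomEquiv A a B b) {φ : IForm ar}
    (hq : QFree φ) {s t : ℕ → ℕ}
    (hsym : ∀ i, SymIn i φ → i < a.length)
    (hmatch : ∀ z ∈ freeVars φ, ∃ p, p < a.length ∧ s z = a.getD p 0 ∧ t z = b.getD p 0) :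
    Sat A s φ ↔ Sat B t φ := by
  induction hq with
  | @atom i v =>
    choose p hp1 hp2 hp3 using fun j => hmatch (v j) ⟨j, rfl⟩
    have key := hAE.2.2 i (hsym i (.atom v)) p hp1
    show A i (fun j => s (v j)) ↔ B i (fun j => t (v j))
    have e1 : (fun j => s (v j)) = fun j => a.getD (p j) 0 := funext hp2
    have e2 : (fun j => t (v j)) = fun j => b.getD (p j) 0 := funext hp3
    rw [e1, e2]; exact key
  | @eq x y =>
    obtain ⟨p, hp1, hp2, hp3⟩ := hmatch x (by simp [freeVars])
    obtain ⟨q, hq1, hq2, hq3⟩ := hmatch y (by simp [freeVars])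
    show s x = s y ↔ t x = t y
    rw [hp2, hq2, hp3, hq3]
    exact hAE.2.1 p q hp1 hq1
  | @not φ _ ih =>
    exact not_congr (ih (fun i h => hsym i (.not h)) hmatch)
  | @and φ ψ _ _ ih1 ih2 =>
    rw [sat_and, sat_and]
    have m1 : ∀ z ∈ freeVars φ, ∃ p, p < a.length ∧ s z = a.getD p 0 ∧ t z = b.getD p 0 :=
      fun z hz => hmatch z (Set.mem_iUnion.2 ⟨0, by simpa [freeVars] using hz⟩)
    have m2 : ∀ z ∈ freeVars ψ, ∃ p, p < a.length ∧ s z = a.getD p 0 ∧ t z = b.getD p 0 :=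
      fun z hz => hmatch z (Set.mem_iUnion.2 ⟨1, by simpa [freeVars] using hz⟩)
    have s1 : ∀ i, SymIn i φ → i < a.length :=
      fun i h => hsym i (SymIn.conj 0 (by simpa using h))
    have s2 : ∀ i, SymIn i ψ → i < a.length :=
      fun i h => hsym i (SymIn.conj 1 (by simpa using h))
    exact and_congr (ih1 s1 m1) (ih2 s2 m2)

/-- Transfer of quantifier-free formulas along `BFLe` (padding the tuples when `β ≠ 0`). -/
lemma qf_transfer {β : Ordinal} {A B : Str ar} {a b : List ℕ} (hBF : BFLe β A a B b)
    {φ : IForm ar} (hq : QFree φ) {s t : ℕ → ℕ}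
    (hsym : β = 0 → ∀ i, SymIn i φ → i < a.length)
    (hmatch : ∀ z ∈ freeVars φ, ∃ p, p < a.length ∧ s z = a.getD p 0 ∧ t z = b.getD p 0) :
    Sat A s φ ↔ Sat B t φ := by
  have hlen : a.length = b.length := bfle_len hBF
  rcases eq_or_ne β 0 with rfl | h0
  · exact qf_sat (BFLe_zero_iff.1 hBF) hq (hsym rfl) hmatch
  · obtain ⟨m, hm⟩ := qf_bound hq
    obtain ⟨c, hc, h0le⟩ := (BFLe_pos_iff h0).1 hBF (List.replicate m 0) 0
      (pos_iff_ne_zero.2 h0)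
    have hAE : atomEquiv B (b ++ List.replicate m 0) A (a ++ c) := BFLe_zero_iff.1 h0le
    refine (qf_sat hAE hq (fun i hi => ?_) (fun z hz => ?_)).symm
    · have := hm i hi; simp; omega
    · obtain ⟨p, hp1, hp2, hp3⟩ := hmatch z hz
      exact ⟨p, by simp; omega, by rw [List.getD_append _ _ _ _ (by omega)]; exact hp3,
        by rw [List.getD_append _ _ _ _ (by omega)]; exact hp2⟩

/-- **Karp-style transfer theorem**: `Π^in_β` formulas go up along `≤_β`,
`Σ^in_β` formulas come down. -/
theorem transfer : ∀ β : Ordinal,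
    (∀ φ : IForm ar, IsPi β φ → ∀ (A : Str ar) (a : List ℕ) (B : Str ar) (b : List ℕ)
      (s t : ℕ → ℕ), BFLe β A a B b →
      (β = 0 → ∀ i, SymIn i φ → i < a.length) →
      (∀ z ∈ freeVars φ, ∃ p, p < a.length ∧ s z = a.getD p 0 ∧ t z = b.getD p 0) →
      Sat A s φ → Sat B t φ) ∧
    (∀ φ : IForm ar, IsSig β φ → ∀ (A : Str ar) (a : List ℕ) (B : Str ar) (b : List ℕ)
      (s t : ℕ → ℕ), BFLe β A a B b →
      (β = 0 → ∀ i, SymIn i φ → i < a.length) →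
      (∀ z ∈ freeVars φ, ∃ p, p < a.length ∧ s z = a.getD p 0 ∧ t z = b.getD p 0) →
      Sat B t φ → Sat A s φ) := by
  intro β
  induction β using Ordinal.induction with
  | h β IH =>
    constructor
    · -- Π case
      intro φ hφ A a B b s t hBF hsym hmatch hSat
      cases hφ with
      | qf hq => exact (qf_transfer hBF hq hsym hmatch).1 hSat
      | @comp _ βf vs φs hβf hφs =>
        have hβ0 : β ≠ 0 := fun h => absurd (h ▸ hβf 0) (not_lt_of_ge zero_le)
        have hlen : a.length = b.length := bfle_len hBF
        rw [sat_conj] at hSat ⊢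
        intro n
        set l := vs n with hl
        set ψ := φs n with hψ
        set γ := βf n with hγ
        rw [sat_alls]
        intro w hw
        -- choose a padding bound for the case γ = 0
        obtain ⟨m, hm⟩ : ∃ m, γ = 0 → ∀ i, SymIn i ψ → i < m := by
          by_cases h : γ = 0
          · have hsg : IsSig γ ψ := hφs n
            obtain ⟨m, hm⟩ := qf_bound (isSig_zero_qf (h ▸ hsg))
            exact ⟨m, fun _ => hm⟩
          · exact ⟨0, fun h' => absurd h' h⟩
        set d := w ++ List.replicate m 0 with hd
        obtain ⟨c, hclen, hle⟩ := (BFLe_pos_iff hβ0).1 hBF d γ (hβf n)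
        have hdlen : d.length = w.length + m := by simp [hd]
        -- source satisfaction at the extended assignment
        have hsrc : Sat A (updL s l c) ψ := by
          have := (sat_alls l s).1 (hSat n) c (by omega)
          exact this
        -- matching for the extended tuples
        have hmatch' : ∀ z ∈ freeVars ψ, ∃ p, p < (b ++ d).length ∧
            updL t l w z = (b ++ d).getD p 0 ∧ updL s l c z = (a ++ c).getD p 0 := by
          intro z hz
          by_cases hzl : z ∈ l
          · obtain ⟨k, hk, hupd⟩ := updL_mem l hzl
            refine ⟨b.length + k, by simp; omega, ?_, ?_⟩
            · rw [hupd t w (by omega), List.getD_append_right _ _ _ _ (by omega)]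
              simp only [Nat.add_sub_cancel_left]
              rw [hd, List.getD_append _ _ _ _ (by omega)]
            · rw [hupd s c (by omega), List.getD_append_right _ _ _ _ (by omega)]
              rw [hlen]; simp only [Nat.add_sub_cancel_left]
          · obtain ⟨p, hp1, hp2, hp3⟩ := hmatch z (Set.mem_iUnion.2 ⟨n, fv_alls l hz hzl⟩)
            refine ⟨p, by simp; omega, ?_, ?_⟩
            · rw [updL_not_mem l hzl, List.getD_append _ _ _ _ (by omega)]; exact hp3
            · rw [updL_not_mem l hzl, List.getD_append _ _ _ _ (by omega)]; exact hp2
        exact (IH γ (hβf n)).2 ψ (hφs n) B (b ++ d) A (a ++ c) (updL t l w) (updL s l c)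
          hle (fun h0 i hi => by have := hm h0 i hi; simp; omega) hmatch' hsrc
    · -- Σ case
      intro φ hφ A a B b s t hBF hsym hmatch hSat
      cases hφ with
      | qf hq => exact (qf_transfer hBF hq hsym hmatch).2 hSat
      | @comp _ βf vs φs hβf hφs =>
        have hβ0 : β ≠ 0 := fun h => absurd (h ▸ hβf 0) (not_lt_of_ge zero_le)
        have hlen : a.length = b.length := bfle_len hBF
        rw [sat_disj] at hSat ⊢
        obtain ⟨n, hn⟩ := hSat
        refine ⟨n, ?_⟩
        set l := vs n with hl
        set ψ := φs n with hψ
        set γ := βf n with hγ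
        obtain ⟨w, hwlen, hw⟩ := (sat_exs l t).1 hn
        obtain ⟨m, hm⟩ : ∃ m, γ = 0 → ∀ i, SymIn i ψ → i < m := by
          by_cases h : γ = 0
          · have hsg : IsPi γ ψ := hφs n
            obtain ⟨m, hm⟩ := qf_bound (isPi_zero_qf (h ▸ hsg))
            exact ⟨m, fun _ => hm⟩
          · exact ⟨0, fun h' => absurd h' h⟩
        set d := w ++ List.replicate m 0 with hd
        obtain ⟨c, hclen, hle⟩ := (BFLe_pos_iff hβ0).1 hBF d γ (hβf n)
        have hdlen : d.length = w.length + m := by simp [hd]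
        have hmatch' : ∀ z ∈ freeVars ψ, ∃ p, p < (b ++ d).length ∧
            updL t l w z = (b ++ d).getD p 0 ∧ updL s l c z = (a ++ c).getD p 0 := by
          intro z hz
          by_cases hzl : z ∈ l
          · obtain ⟨k, hk, hupd⟩ := updL_mem l hzl
            refine ⟨b.length + k, by simp; omega, ?_, ?_⟩
            · rw [hupd t w (by omega), List.getD_append_right _ _ _ _ (by omega)]
              simp only [Nat.add_sub_cancel_left]
              rw [hd, List.getD_append _ _ _ _ (by omega)]
            · rw [hupd s c (by omega), List.getD_append_right _ _ _ _ (by omega)]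
              rw [hlen]; simp only [Nat.add_sub_cancel_left]
          · obtain ⟨p, hp1, hp2, hp3⟩ := hmatch z (Set.mem_iUnion.2 ⟨n, by
              show z ∈ freeVars (IForm.not (IForm.exs l ψ))
              exact fv_exs l hz hzl⟩)
            refine ⟨p, by simp; omega, ?_, ?_⟩
            · rw [updL_not_mem l hzl, List.getD_append _ _ _ _ (by omega)]; exact hp3
            · rw [updL_not_mem l hzl, List.getD_append _ _ _ _ (by omega)]; exact hp2
        have htgt : Sat A (updL s l c) ψ :=
          (IH γ (hβf n)).1 ψ (hφs n) B (b ++ d) A (a ++ c) (updL t l w) (updL s l c)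
            hle (fun h0 i hi => by have := hm h0 i hi; simp; omega) hmatch' hw
        rw [sat_exs]
        refine ⟨c.take l.length, by simp; omega, ?_⟩
        rw [← updL_take]; exact htgt

end Aux3
section Aux4

variable {ar : ℕ → ℕ}

/-- **Key lemma**: in a model of `T_α`, `φ_σ(b̄)` implies `(C,c̄) ≤_β (M.base, b̄)`
(and dually for the base), where `(C,c̄)` represents the type `σ`. -/
theorem phi_bfle (T : IForm ar) (α : Ordinal) (M : ExtModel ar) (hM : ModelsTAlpha T α M) :
    ∀ β : Ordinal,
      (β ≤ α → ∀ (C : Str ar) (c b : List ℕ), SatS C T → M.Phi β C c b →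
        BFLe β C c M.base b) ∧
      (β < α → ∀ (C : Str ar) (c b : List ℕ), SatS C T → M.Phi α C c b →
        BFLe β M.base b C c) := by
  obtain ⟨hInv, hT1, hT3, hT2, hT5⟩ := hM
  intro β
  induction β using Ordinal.induction with
  | h β IH =>
    constructor
    · intro hβα C c b hC hPhi
      have hlen : b.length = c.length := ((hT2 β hβα C c hC b).1 hPhi).1
      rcases eq_or_ne β 0 with rfl | h0
      · exact BFLe_zero_iff.2 (((hT2 0 hβα C c hC b).1 hPhi).2.1 rfl)
      · rw [BFLe_pos_iff h0]
        intro d γ hγ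
        have hγα : γ < α := lt_of_lt_of_le hγ hβα
        obtain ⟨D, d₁, hD, hd₁len, hPhiα⟩ := hT1 (b ++ d)
        have hPsi : PsiH T α M γ D d₁ (b ++ d) :=
          ⟨D, d₁, hD, hd₁len, BFEq_refl γ D d₁, hPhiα⟩
        have hPhiγ : M.Phi γ D d₁ (b ++ d) := (hT5 γ hγα D d₁ (b ++ d) hD hPsi).1
        have hExt : ExtMem γ D d₁ C c := by
          by_contra hne
          exact ((hT2 β hβα C c hC b).1 hPhi).2.2 γ hγ D d₁ hD hne d
            (by rw [hd₁len]; simp) hPhiγ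
        obtain ⟨y, hylen, hBFyc⟩ := hExt
        have h2 : BFLe γ M.base (b ++ d) D d₁ := (IH γ hγ).2 hγα D d₁ (b ++ d) hD hPhiα
        refine ⟨y, ?_, BFLe_trans γ h2 hBFyc⟩
        simp only [List.length_append] at hd₁len
        omega
    · intro hβα C c b hC hPhiα
      have hlenb : b.length = c.length := ((hT2 α le_rfl C c hC b).1 hPhiα).1
      have hPsi : PsiH T α M β C c b := ⟨C, c, hC, hlenb.symm, BFEq_refl β C c, hPhiα⟩
      obtain ⟨hPhiβ, hExtCl⟩ := hT5 β hβα C c b hC hPsi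
      rcases eq_or_ne β 0 with rfl | h0
      · exact BFLe_zero_iff.2
          (atomEquiv_symm (((hT2 0 (le_of_lt hβα) C c hC b).1 hPhiβ).2.1 rfl))
      · rw [BFLe_pos_iff h0]
        intro d γ hγ
        have hmem : ExtMem γ C (c ++ d) C c := ⟨d, by simp, BFLe_refl γ C (c ++ d)⟩
        obtain ⟨y, hylen, hPhiγ⟩ := hExtCl γ hγ C (c ++ d) hC hmem
        have hbf := (IH γ hγ).1 (le_of_lt (lt_trans hγ hβα)) C (c ++ d) (b ++ y) hC hPhiγ
        refine ⟨y, ?_, hbf⟩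
        simp only [List.length_append] at hylen
        omega

end Aux4
/-- If `T` is `Π^in_α`-axiomatizable, every model of `T_α` is a
model of `T`. -/
theorem Talpha_implies_T {ar : ℕ → ℕ} (T : IForm ar) (α : Ordinal)
    (hsent : SentenceF T) (hPi : IsPi α T)
    (M : ExtModel ar) (hM : ModelsTAlpha T α M) : SatS M.base T := by
  obtain ⟨m, hm⟩ : ∃ m, α = 0 → ∀ i, SymIn i T → i < m := by
    by_cases h : α = 0
    · obtain ⟨m, hm⟩ := qf_bound (isPi_zero_qf (h ▸ hPi))
      exact ⟨m, fun _ => hm⟩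
    · exact ⟨0, fun h' => absurd h' h⟩
  obtain ⟨C, c, hC, hclen', hPhi⟩ := hM.2.1 (List.replicate m 0)
  have hclen : (List.replicate m 0 : List ℕ).length = c.length := hclen'.symm
  have hBF : BFLe α C c M.base (List.replicate m 0) :=
    (phi_bfle T α M hM α).1 le_rfl C c (List.replicate m 0) hC hPhi
  exact (transfer α).1 T hPi C c M.base (List.replicate m 0) (fun _ => 0) (fun _ => 0) hBF
    (fun h0 i hi => by have := hm h0 i hi; simp at hclen; omega)
    (fun z hz => absurd hz (by rw [hsent]; exact Set.notMem_empty z)) hC
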